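/- Let $\{V_n\}, \{W_n\}, \{U_n\}$ be consistent sequences of $\{G_n\}$-representations, let $\{K_n \subseteq U_n\}$ be a sequence of convex cones that is both intersection-compatible ($K_{n+1} \cap U_n = K_n$) and projection-compatible ($\mathcal{P}_{U_n} K_{n+1} = K_n$), and let $C_n = \{x \in V_n : \exists y \in W_n \text{ s.t. } A_n x + B_n y + u_n \in K_n\}$. Assume $\{A_n\}$, $\{B_n\}$, $\{B_n^*\}$ are morphisms of sequences, $\{u_n\}$ is a freely-described element (i.e., $u_n \in U_n^{G_n}$ with $\mathcal{P}_{U_n}(u_{n+1}) = u_n$), and $u_{n+1} - u_n \in K_{n+1}$ for all $n$. Then the sequence $\{C_n\}$ is intersection-compatible: $C_{n+1} \cap V_n = C_n$ for all $n$. -/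

import Mathlib

/-- (Theorem on certificates of intersection compatibility.)
Given consistent sequences `{V n}, {W n}, {U n}` of `{G n}`-representations, a sequence of
convex cones `{K n ⊆ U n}` that is both intersection- and projection-compatible, and the
sets `C n = {x ∈ V n | ∃ y ∈ W n, A n x + B n y + u n ∈ K n}`, if `{A n}`, `{B n}`, `{B n *}`
are morphisms of sequences, `{u n}` is a freely-described element, and
`u (n+1) - u n ∈ K (n+1)` for all `n`, then `{C n}` is intersection-compatible. -/
theorem certified_intersection_compatibility
    {Γ : Type*} [Group Γ] (G : ℕ → Subgroup Γ) (hG : ∀ n, G n ≤ G (n + 1))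
    {HV HW HU : Type*}
    [NormedAddCommGroup HV] [InnerProductSpace ℝ HV] [FiniteDimensional ℝ HV]
    [NormedAddCommGroup HW] [InnerProductSpace ℝ HW] [FiniteDimensional ℝ HW]
    [NormedAddCommGroup HU] [InnerProductSpace ℝ HU] [FiniteDimensional ℝ HU]
    (ρV : Γ →* (HV ≃ₗᵢ[ℝ] HV)) (ρW : Γ →* (HW ≃ₗᵢ[ℝ] HW)) (ρU : Γ →* (HU ≃ₗᵢ[ℝ] HU))
    (V : ℕ → Submodule ℝ HV) (hV : ∀ n, V n ≤ V (n + 1))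
    (W : ℕ → Submodule ℝ HW) (hW : ∀ n, W n ≤ W (n + 1))
    (U : ℕ → Submodule ℝ HU) (hU : ∀ n, U n ≤ U (n + 1))
    (hactV : ∀ n m, n ≤ m → ∀ g ∈ G n, ∀ v ∈ V m, ρV g v ∈ V m)
    (hactW : ∀ n m, n ≤ m → ∀ g ∈ G n, ∀ w ∈ W m, ρW g w ∈ W m)
    (hactU : ∀ n m, n ≤ m → ∀ g ∈ G n, ∀ u ∈ U m, ρU g u ∈ U m)
    (K : ℕ → ConvexCone ℝ HU)
    (hKU : ∀ n, (K n : Set HU) ⊆ (U n : Set HU))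
    (hKinv : ∀ n, ∀ g ∈ G n, ∀ x ∈ K n, ρU g x ∈ K n)
    (hKint : ∀ n, (K (n + 1) : Set HU) ∩ (U n : Set HU) = (K n : Set HU))
    (hKproj : ∀ n, (fun x : HU => (Submodule.orthogonalProjectionOnto (U n) x : HU)) ''
        (K (n + 1) : Set HU) = (K n : Set HU))
    (A : ℕ → HV →ₗ[ℝ] HU) (B : ℕ → HW →ₗ[ℝ] HU)
    (hAmaps : ∀ n, ∀ v ∈ V n, A n v ∈ U n)
    (hAequiv : ∀ n, ∀ g ∈ G n, ∀ v ∈ V n, A n (ρV g v) = ρU g (A n v))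
    (hAcompat : ∀ n, ∀ v ∈ V n, A (n + 1) v = A n v)
    (hBmaps : ∀ n, ∀ w ∈ W n, B n w ∈ U n)
    (hBequiv : ∀ n, ∀ g ∈ G n, ∀ w ∈ W n, B n (ρW g w) = ρU g (B n w))
    (hBcompat : ∀ n, ∀ w ∈ W n, B (n + 1) w = B n w)
    (hBadj : ∀ n, ∀ w ∈ W (n + 1),
      (Submodule.orthogonalProjectionOnto (U n) (B (n + 1) w) : HU)
        = B n (Submodule.orthogonalProjectionOnto (W n) w))
    (u : ℕ → HU)
    (humem : ∀ n, u n ∈ U n)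
    (huinv : ∀ n, ∀ g ∈ G n, ρU g (u n) = u n)
    (hufree : ∀ n, (Submodule.orthogonalProjectionOnto (U n) (u (n + 1)) : HU) = u n)
    (hucone : ∀ n, u (n + 1) - u n ∈ K (n + 1)) :
    ∀ n, {x : HV | x ∈ V (n + 1) ∧
            ∃ y ∈ W (n + 1), A (n + 1) x + B (n + 1) y + u (n + 1) ∈ K (n + 1)}
          ∩ (V n : Set HV)
        = {x : HV | x ∈ V n ∧ ∃ y ∈ W n, A n x + B n y + u n ∈ K n} := by
  intro n
  ext x
  constructor
  · rintro ⟨⟨-, y, hy, hz⟩, hxV⟩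
    refine ⟨hxV, Submodule.orthogonalProjectionOnto (W n) y, (Submodule.orthogonalProjectionOnto (W n) y).2, ?_⟩
    have hmem : (Submodule.orthogonalProjectionOnto (U n)
        (A (n + 1) x + B (n + 1) y + u (n + 1)) : HU) ∈ (K n : Set HU) := by
      rw [← hKproj n]; exact ⟨_, hz, rfl⟩
    have hA : (Submodule.orthogonalProjectionOnto (U n) (A (n + 1) x) : HU) = A n x := by
      rw [hAcompat n x hxV]
      exact Submodule.starProjection_eq_self_iff.2 (hAmaps n x hxV)
    have hB := hBadj n y hy
    have hu := hufree n
    simp only [map_add, Submodule.coe_add, hA, hB, hu] at hmem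
    exact hmem
  · rintro ⟨hxV, y, hy, hz⟩
    refine ⟨⟨hV n hxV, y, hW n hy, ?_⟩, hxV⟩
    have h1 : A (n + 1) x + B (n + 1) y + u (n + 1)
        = (A n x + B n y + u n) + (u (n + 1) - u n) := by
      rw [hAcompat n x hxV, hBcompat n y hy]; abel
    rw [h1]
    have hKsub : (K n : Set HU) ⊆ (K (n + 1) : Set HU) := by
      rw [← hKint n]; exact Set.inter_subset_left
    exact (K (n + 1)).add_mem (hKsub hz) (hucone n)
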